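/- In the saddle-point setting, if η < 1/2 then ‖(H1 F⁻¹ − I) Bᵀ‖_{H2,H1⁻¹} ≤ C₁ η/(1 − η) ≤ 2 C₁ η. -/

import Mathlib

open Matrix

/-- The `H`-norm of a vector: `‖u‖_H = (uᵀ H u)^{1/2}`. -/
noncomputable def vnorm {α : Type*} [Fintype α] (H : Matrix α α ℝ) (u : α → ℝ) : ℝ :=
  Real.sqrt (u ⬝ᵥ (H *ᵥ u))

/-- The weighted operator norm `‖M‖_{H1,H2} = sup_{v ≠ 0} ‖M v‖_{H2} / ‖v‖_{H1}`.
For a square matrix, `‖M‖_H = wnorm H H M`; the spectral norm is `wnorm 1 1 M`. -/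
noncomputable def wnorm {α β : Type*} [Fintype α] [Fintype β]
    (H1 : Matrix α α ℝ) (H2 : Matrix β β ℝ) (M : Matrix β α ℝ) : ℝ :=
  sSup {r : ℝ | ∃ v : α → ℝ, v ≠ 0 ∧ r = vnorm H2 (M *ᵥ v) / vnorm H1 v}
section Aux

variable {α : Type*} [Fintype α]

lemma vnorm_nonneg (H : Matrix α α ℝ) (u : α → ℝ) : 0 ≤ vnorm H u := Real.sqrt_nonneg _

lemma vnorm_sq {H : Matrix α α ℝ} (hH : H.PosSemidef) (u : α → ℝ) :
    vnorm H u ^ 2 = u ⬝ᵥ (H *ᵥ u) := by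
  have := hH.dotProduct_mulVec_nonneg u
  simp only [star_trivial] at this
  exact Real.sq_sqrt this

lemma vnorm_pos {H : Matrix α α ℝ} (hH : H.PosDef) {u : α → ℝ} (hu : u ≠ 0) :
    0 < vnorm H u := by
  have := hH.dotProduct_mulVec_pos hu
  simp only [star_trivial] at this
  exact Real.sqrt_pos.2 this

lemma dot_cs (x y : α → ℝ) : x ⬝ᵥ y ≤ Real.sqrt (x ⬝ᵥ x) * Real.sqrt (y ⬝ᵥ y) := by
  have h : (x ⬝ᵥ y) ^ 2 ≤ (x ⬝ᵥ x) * (y ⬝ᵥ y) := by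
    simpa [dotProduct, pow_two] using Finset.sum_mul_sq_le_sq_mul_sq Finset.univ x y
  calc x ⬝ᵥ y ≤ |x ⬝ᵥ y| := le_abs_self _
    _ = Real.sqrt ((x ⬝ᵥ y) ^ 2) := (Real.sqrt_sq_eq_abs _).symm
    _ ≤ Real.sqrt ((x ⬝ᵥ x) * (y ⬝ᵥ y)) := Real.sqrt_le_sqrt h
    _ = _ := Real.sqrt_mul (by
        exact Finset.sum_nonneg fun i _ => mul_self_nonneg _) _

variable [DecidableEq α]

open scoped MatrixOrder in
lemma cs_H {H : Matrix α α ℝ} (hH : H.PosSemidef) (a b : α → ℝ) :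
    a ⬝ᵥ (H *ᵥ b) ≤ vnorm H a * vnorm H b := by
  set S := CFC.sqrt H with hS
  have hSsym : Sᵀ = S := by
    have := (CFC.sqrt_nonneg H).posSemidef.1
    rw [← conjTranspose_eq_transpose_of_trivial]; exact this
  have key : ∀ u w : α → ℝ, u ⬝ᵥ (H *ᵥ w) = (S *ᵥ u) ⬝ᵥ (S *ᵥ w) := by
    intro u w
    have hvm : u ᵥ* S = S *ᵥ u := by
      conv_lhs => rw [← hSsym]
      exact vecMul_transpose S u
    have hSS : S * S = H := CFC.sqrt_mul_sqrt_self H hH.nonneg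
    rw [← hSS, ← mulVec_mulVec w S S, dotProduct_mulVec u S, hvm]
  have hva : vnorm H a = Real.sqrt ((S *ᵥ a) ⬝ᵥ (S *ᵥ a)) := by rw [vnorm, key]
  have hvb : vnorm H b = Real.sqrt ((S *ᵥ b) ⬝ᵥ (S *ᵥ b)) := by rw [vnorm, key]
  rw [key, hva, hvb]
  exact dot_cs _ _

end Aux

section Aux2
variable {α : Type*} [Fintype α]

lemma vnorm_smul (H : Matrix α α ℝ) (c : ℝ) (v : α → ℝ) :
    vnorm H (c • v) = |c| * vnorm H v := by
  rw [vnorm, vnorm, mulVec_smul, smul_dotProduct, dotProduct_smul, smul_eq_mul, smul_eq_mul,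
    ← mul_assoc, ← pow_two, Real.sqrt_mul (sq_nonneg c), Real.sqrt_sq_eq_abs]

lemma vnorm_neg (H : Matrix α α ℝ) (v : α → ℝ) : vnorm H (-v) = vnorm H v := by
  have := vnorm_smul H (-1) v
  simpa using this

lemma vnorm_zero (H : Matrix α α ℝ) : vnorm H 0 = 0 := by
  simp [vnorm]

variable [DecidableEq α]

lemma posdef_isUnit_det {H : Matrix α α ℝ} (hH : H.PosDef) : IsUnit H.det :=
  isUnit_iff_ne_zero.mpr (ne_of_gt hH.det_pos)

lemma vnorm_inv_mulVec {H : Matrix α α ℝ} (hH : H.PosDef) (u : α → ℝ) :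
    vnorm H (H⁻¹ *ᵥ u) = vnorm H⁻¹ u := by
  have hdet : IsUnit H.det := posdef_isUnit_det hH
  have hHinv : H *ᵥ (H⁻¹ *ᵥ u) = u := by
    rw [mulVec_mulVec, mul_nonsing_inv _ hdet, one_mulVec]
  rw [vnorm, vnorm, hHinv, dotProduct_comm]

lemma vnorm_mulVec_inv {H : Matrix α α ℝ} (hH : H.PosDef) (u : α → ℝ) :
    vnorm H⁻¹ (H *ᵥ u) = vnorm H u := by
  have h := vnorm_inv_mulVec hH.inv u
  rwa [nonsing_inv_nonsing_inv _ (posdef_isUnit_det hH)] at h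

end Aux2

lemma wnorm_bddAbove {n m : ℕ} {H1 : Matrix (Fin n) (Fin n) ℝ} (hH1 : H1.PosDef)
    (H2 : Matrix (Fin m) (Fin m) ℝ) (M : Matrix (Fin m) (Fin n) ℝ) :
    BddAbove {r : ℝ | ∃ v : Fin n → ℝ, v ≠ 0 ∧ r = vnorm H2 (M *ᵥ v) / vnorm H1 v} := by
  set f : (Fin n → ℝ) → ℝ := fun v => vnorm H2 (M *ᵥ v) / vnorm H1 v with hf
  have hcont1 : Continuous fun v : Fin n → ℝ => vnorm H2 (M *ᵥ v) := by
    apply Real.continuous_sqrt.comp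
    exact (continuous_const.matrix_mulVec continuous_id).dotProduct
      (continuous_const.matrix_mulVec (continuous_const.matrix_mulVec continuous_id))
  have hcont2 : Continuous fun v : Fin n → ℝ => vnorm H1 v := by
    apply Real.continuous_sqrt.comp
    exact continuous_id.dotProduct (continuous_const.matrix_mulVec continuous_id)
  have hconton : ContinuousOn f (Metric.sphere (0 : Fin n → ℝ) 1) := by
    apply ContinuousOn.div hcont1.continuousOn hcont2.continuousOn
    intro v hv
    have hvne : v ≠ 0 := by
      intro h
      simp [h] at hv
    exact ne_of_gt (vnorm_pos hH1 hvne)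
  have hcomp : IsCompact (f '' Metric.sphere (0 : Fin n → ℝ) 1) :=
    (isCompact_sphere _ _).image_of_continuousOn hconton
  apply hcomp.bddAbove.mono
  rintro r ⟨v, hv, rfl⟩
  have hnv : ‖v‖ ≠ 0 := norm_ne_zero_iff.mpr hv
  refine ⟨‖v‖⁻¹ • v, ?_, ?_⟩
  · simp [norm_smul, abs_of_nonneg (norm_nonneg v), inv_mul_cancel₀ hnv]
  · show f (‖v‖⁻¹ • v) = f v
    have habs : |‖v‖⁻¹| ≠ 0 := by
      simpa using inv_ne_zero hnv
    rw [hf]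
    simp only [mulVec_smul]
    rw [vnorm_smul, vnorm_smul, mul_div_mul_left _ _ habs]

lemma wnorm_pointwise {n m : ℕ} {H1 : Matrix (Fin n) (Fin n) ℝ} (hH1 : H1.PosDef)
    (H2 : Matrix (Fin m) (Fin m) ℝ) (M : Matrix (Fin m) (Fin n) ℝ) {c : ℝ} (hc : 0 ≤ c)
    (h : wnorm H1 H2 M ≤ c) (v : Fin n → ℝ) :
    vnorm H2 (M *ᵥ v) ≤ c * vnorm H1 v := by
  rcases eq_or_ne v 0 with rfl | hv
  · simp [mulVec_zero, vnorm_zero]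
  · have hmem : vnorm H2 (M *ᵥ v) / vnorm H1 v ∈
        {r : ℝ | ∃ u : Fin n → ℝ, u ≠ 0 ∧ r = vnorm H2 (M *ᵥ u) / vnorm H1 u} := ⟨v, hv, rfl⟩
    have hle := (le_csSup (wnorm_bddAbove hH1 H2 M) hmem).trans h
    have hpos := vnorm_pos hH1 hv
    calc vnorm H2 (M *ᵥ v) = (vnorm H2 (M *ᵥ v) / vnorm H1 v) * vnorm H1 v := by
          field_simp
      _ ≤ c * vnorm H1 v := mul_le_mul_of_nonneg_right hle hpos.le

theorem stmt_8
    {n m : ℕ} (F : Matrix (Fin n) (Fin n) ℝ) (B : Matrix (Fin m) (Fin n) ℝ)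
    (H1 N : Matrix (Fin n) (Fin n) ℝ) (H2 : Matrix (Fin m) (Fin m) ℝ)
    (η C₁ C₂ : ℝ) (hη : 0 < η) (hC1 : 0 < C₁) (hC2 : 0 < C₂)
    (hH1 : H1 = ((1 : ℝ)/2) • (F + Fᵀ)) (hN : N = ((1 : ℝ)/2) • (F - Fᵀ))
    (hH1pd : H1.PosDef) (hH2pd : H2.PosDef)
    (hBrank : B.rank = m)
    (hNnorm : wnorm H1 H1⁻¹ N ≤ η)
    (hBnorm : wnorm H1 H2⁻¹ B ≤ C₁)
    (hinfsup : ∀ x : Fin m → ℝ, x ≠ 0 → C₂ * vnorm H2 x ≤ vnorm H1⁻¹ (Bᵀ *ᵥ x))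
    (hsmall : η < 1/2) :
    wnorm H2 H1⁻¹ ((H1 * F⁻¹ - 1) * Bᵀ) ≤ C₁ * η / (1 - η) ∧
    C₁ * η / (1 - η) ≤ 2 * C₁ * η := by
  have hη1 : (0:ℝ) < 1 - η := by linarith
  have hF : F = H1 + N := by rw [hH1, hN]; module
  have hH1eq : H1 = F - N := by rw [hF]; exact (add_sub_cancel_right H1 N).symm
  have hNT : Nᵀ = -N := by
    rw [hN, transpose_smul, transpose_sub, transpose_transpose]
    module
  have hskew : ∀ v : Fin n → ℝ, v ⬝ᵥ (N *ᵥ v) = 0 := by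
    intro v
    have h1 : v ᵥ* N = Nᵀ *ᵥ v := by
      have := vecMul_transpose Nᵀ v
      rwa [transpose_transpose] at this
    have h2 : v ⬝ᵥ (N *ᵥ v) = -(v ⬝ᵥ (N *ᵥ v)) := by
      calc v ⬝ᵥ (N *ᵥ v) = (v ᵥ* N) ⬝ᵥ v := dotProduct_mulVec v N v
        _ = (Nᵀ *ᵥ v) ⬝ᵥ v := by rw [h1]
        _ = ((-N) *ᵥ v) ⬝ᵥ v := by rw [hNT]
        _ = -((N *ᵥ v) ⬝ᵥ v) := by rw [neg_mulVec, neg_dotProduct]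
        _ = -(v ⬝ᵥ (N *ᵥ v)) := by rw [dotProduct_comm]
    linarith
  have hH1det : IsUnit H1.det := posdef_isUnit_det hH1pd
  have hH2det : IsUnit H2.det := posdef_isUnit_det hH2pd
  have hH1invpd := hH1pd.inv
  have hFdet : IsUnit F.det := by
    apply isUnit_iff_ne_zero.mpr
    intro h0
    obtain ⟨v, hv, hFv⟩ := (Matrix.exists_mulVec_eq_zero_iff).mpr h0
    have hpos := hH1pd.dotProduct_mulVec_pos hv
    simp only [star_trivial] at hpos
    have : v ⬝ᵥ (H1 *ᵥ v) = 0 := by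
      rw [hH1eq, sub_mulVec, dotProduct_sub, hFv, hskew v, dotProduct_zero, sub_zero]
    linarith
  have h1 : H1 * F⁻¹ = 1 - N * F⁻¹ := by
    rw [hH1eq, Matrix.sub_mul, mul_nonsing_inv _ hFdet]
  have hid : (H1 * F⁻¹ - 1) * Bᵀ = -(N * (F⁻¹ * Bᵀ)) := by
    rw [h1, sub_sub_cancel_left, Matrix.neg_mul, Matrix.mul_assoc]
  have hL4 : ∀ u : Fin n → ℝ, vnorm H1 (F⁻¹ *ᵥ u) ≤ vnorm H1⁻¹ u := by
    intro u
    set w := F⁻¹ *ᵥ u with hw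
    have hFw : F *ᵥ w = u := by rw [hw, mulVec_mulVec, mul_nonsing_inv _ hFdet, one_mulVec]
    have ha2 : vnorm H1 w ^ 2 = w ⬝ᵥ u := by
      rw [vnorm_sq hH1pd.posSemidef, hH1eq, sub_mulVec, dotProduct_sub, hFw, hskew w, sub_zero]
    have hcs : w ⬝ᵥ u ≤ vnorm H1 w * vnorm H1⁻¹ u := by
      have hu : H1 *ᵥ (H1⁻¹ *ᵥ u) = u := by
        rw [mulVec_mulVec, mul_nonsing_inv _ hH1det, one_mulVec]
      calc w ⬝ᵥ u = w ⬝ᵥ (H1 *ᵥ (H1⁻¹ *ᵥ u)) := by rw [hu]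
        _ ≤ vnorm H1 w * vnorm H1 (H1⁻¹ *ᵥ u) := cs_H hH1pd.posSemidef _ _
        _ = vnorm H1 w * vnorm H1⁻¹ u := by rw [vnorm_inv_mulVec hH1pd]
    nlinarith [vnorm_nonneg H1 w, vnorm_nonneg H1⁻¹ u]
  have hBT : ∀ x : Fin m → ℝ, vnorm H1⁻¹ (Bᵀ *ᵥ x) ≤ C₁ * vnorm H2 x := by
    intro x
    set v := H1⁻¹ *ᵥ (Bᵀ *ᵥ x) with hv
    have hb2 : vnorm H1⁻¹ (Bᵀ *ᵥ x) ^ 2 = (B *ᵥ v) ⬝ᵥ x := by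
      rw [vnorm_sq hH1invpd.posSemidef, ← hv]
      calc (Bᵀ *ᵥ x) ⬝ᵥ v = v ⬝ᵥ (Bᵀ *ᵥ x) := dotProduct_comm _ _
        _ = (v ᵥ* Bᵀ) ⬝ᵥ x := dotProduct_mulVec v Bᵀ x
        _ = (B *ᵥ v) ⬝ᵥ x := by rw [vecMul_transpose]
    have h2 : (B *ᵥ v) ⬝ᵥ x ≤ vnorm H2⁻¹ (B *ᵥ v) * vnorm H2 x := by
      have hx : H2⁻¹ *ᵥ (H2 *ᵥ x) = x := by
        rw [mulVec_mulVec, nonsing_inv_mul _ hH2det, one_mulVec]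
      calc (B *ᵥ v) ⬝ᵥ x = (B *ᵥ v) ⬝ᵥ (H2⁻¹ *ᵥ (H2 *ᵥ x)) := by rw [hx]
        _ ≤ vnorm H2⁻¹ (B *ᵥ v) * vnorm H2⁻¹ (H2 *ᵥ x) := cs_H hH2pd.inv.posSemidef _ _
        _ = vnorm H2⁻¹ (B *ᵥ v) * vnorm H2 x := by rw [vnorm_mulVec_inv hH2pd]
    have h3 : vnorm H2⁻¹ (B *ᵥ v) ≤ C₁ * vnorm H1 v :=
      wnorm_pointwise hH1pd _ B hC1.le hBnorm v
    have h4 : vnorm H1 v = vnorm H1⁻¹ (Bᵀ *ᵥ x) := by rw [hv, vnorm_inv_mulVec hH1pd]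
    have h5 : vnorm H1⁻¹ (Bᵀ *ᵥ x) ^ 2 ≤
        C₁ * vnorm H1⁻¹ (Bᵀ *ᵥ x) * vnorm H2 x := by
      rw [hb2]
      calc (B *ᵥ v) ⬝ᵥ x ≤ vnorm H2⁻¹ (B *ᵥ v) * vnorm H2 x := h2
        _ ≤ C₁ * vnorm H1⁻¹ (Bᵀ *ᵥ x) * vnorm H2 x := by
            apply mul_le_mul_of_nonneg_right _ (vnorm_nonneg _ _)
            rw [← h4]; exact h3
    nlinarith [h5, vnorm_nonneg H2 x, vnorm_nonneg H1⁻¹ (Bᵀ *ᵥ x),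
      mul_nonneg hC1.le (vnorm_nonneg H2 x)]
  have hmain : ∀ x : Fin m → ℝ,
      vnorm H1⁻¹ (((H1 * F⁻¹ - 1) * Bᵀ) *ᵥ x) ≤ C₁ * η * vnorm H2 x := by
    intro x
    have heq : ((H1 * F⁻¹ - 1) * Bᵀ) *ᵥ x = -(N *ᵥ (F⁻¹ *ᵥ (Bᵀ *ᵥ x))) := by
      rw [hid, neg_mulVec, ← mulVec_mulVec, ← mulVec_mulVec]
    rw [heq, vnorm_neg]
    calc vnorm H1⁻¹ (N *ᵥ (F⁻¹ *ᵥ (Bᵀ *ᵥ x))) ≤ η * vnorm H1 (F⁻¹ *ᵥ (Bᵀ *ᵥ x)) :=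
        wnorm_pointwise hH1pd _ N hη.le hNnorm _
      _ ≤ η * vnorm H1⁻¹ (Bᵀ *ᵥ x) := mul_le_mul_of_nonneg_left (hL4 _) hη.le
      _ ≤ η * (C₁ * vnorm H2 x) := mul_le_mul_of_nonneg_left (hBT x) hη.le
      _ = C₁ * η * vnorm H2 x := by ring
  constructor
  · apply Real.sSup_le
    · rintro r ⟨x, hx, rfl⟩
      rw [div_le_iff₀ (vnorm_pos hH2pd hx)]
      calc vnorm H1⁻¹ (((H1 * F⁻¹ - 1) * Bᵀ) *ᵥ x) ≤ C₁ * η * vnorm H2 x := hmain x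
        _ ≤ C₁ * η / (1 - η) * vnorm H2 x := by
            apply mul_le_mul_of_nonneg_right _ (vnorm_nonneg _ _)
            rw [le_div_iff₀ hη1]
            nlinarith [mul_pos (mul_pos hC1 hη) hη]
    · positivity
  · rw [div_le_iff₀ hη1]
    nlinarith [mul_pos hC1 hη]
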